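/- arXiv:0902.4185 — 4 statements merged into one kernel-verified Lean document; each statement's English description precedes it below -/
import Mathlib

section
/- (Deterministic core of Theorem 6.1.) Let a CSP instance with N = |V| variables be given in which every constraint is locked and every variable has degree exactly L. Suppose the factor graph is an (ε, L/2)-expander in the sense that for every nonempty set S ⊆ V of variables with |S| ≤ ε·N, the number of constraints whose scope meets S is strictly greater than (L/2)·|S|. Then any two assignments σ, τ : V → Bool that both satisfy every constraint are either equal or differ on more than ε·N variables; in particular there is no satisfying assignment at positive Hamming distance at most ε·N from a given satisfying assignment. -/
/-- A constraint satisfaction problem instance. -/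
structure CSP (V C : Type*) where
  arity : C → ℕ
  scope : (c : C) → Fin (arity c) → V
  pred : (c : C) → (Fin (arity c) → Bool) → Prop

/-- An assignment satisfies the instance if it satisfies every constraint. -/
def CSP.Satisfies {V C : Type*} (P : CSP V C) (σ : V → Bool) : Prop :=
  ∀ c, P.pred c (fun i => σ (P.scope c i))

/-- A constraint is locked if no two satisfying local assignments differ in
exactly one coordinate. -/
def CSP.LockedAt {V C : Type*} (P : CSP V C) (c : C) : Prop :=
  ¬ ∃ x y : Fin (P.arity c) → Bool, P.pred c x ∧ P.pred c y ∧
      (Finset.univ.filter fun i => x i ≠ y i).card = 1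

/-- The degree of a variable `v`: the number of pairs `(c, i)` with
`scope c i = v`. -/
def CSP.degree {V C : Type*} [Fintype C] [DecidableEq V] (P : CSP V C) (v : V) : ℕ :=
  (Finset.univ.filter fun p : (Σ c : C, Fin (P.arity c)) => P.scope p.1 p.2 = v).card

/-- Deterministic core of Theorem 6.1: in a locked `L`-regular instance whose
factor graph is an `(ε, L/2)`-expander, any two satisfying assignments are
either equal or differ on more than `ε·N` variables. -/
theorem locked_expander_solutions_far_apart
    {V C : Type*} [Fintype V] [Fintype C] [DecidableEq V]
    (P : CSP V C) (L : ℕ) (ε : ℝ)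
    (hlocked : ∀ c, P.LockedAt c)
    (hdeg : ∀ v : V, P.degree v = L)
    (hexpander : ∀ S : Finset V, S.Nonempty → (S.card : ℝ) ≤ ε * Fintype.card V →
      (L : ℝ) / 2 * S.card <
        ((Finset.univ.filter fun c : C => ∃ i, P.scope c i ∈ S).card : ℝ))
    (σ τ : V → Bool) (hσ : P.Satisfies σ) (hτ : P.Satisfies τ) :
    σ = τ ∨
      ε * Fintype.card V < ((Finset.univ.filter fun v : V => σ v ≠ τ v).card : ℝ) := by

  classical
  set S : Finset V := Finset.univ.filter fun v => σ v ≠ τ v with hS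
  by_cases hSe : S.Nonempty
  · right
    by_contra hle
    push_neg at hle
    have hmem : ∀ v, v ∈ S ↔ σ v ≠ τ v := by
      intro v; simp [hS]
    -- each constraint meeting S has at least 2 coordinates in S
    have hconstr : ∀ c : C, (∃ i, P.scope c i ∈ S) →
        2 ≤ (Finset.univ.filter fun i => P.scope c i ∈ S).card := by
      intro c ⟨i, hi⟩
      have heq : (Finset.univ.filter fun i => P.scope c i ∈ S)
          = Finset.univ.filter fun i =>
              (fun j => σ (P.scope c j)) i ≠ (fun j => τ (P.scope c j)) i := by
        apply Finset.filter_congr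
        intro j _
        simp [hmem]
      have hpos : 0 < (Finset.univ.filter fun i => P.scope c i ∈ S).card :=
        Finset.card_pos.mpr ⟨i, by simp [hi]⟩
      have hne1 : (Finset.univ.filter fun i => P.scope c i ∈ S).card ≠ 1 := by
        intro h1
        exact hlocked c ⟨_, _, hσ c, hτ c, by rw [← heq]; exact h1⟩
      omega
    -- total incidences
    set T : Finset (Σ c : C, Fin (P.arity c)) :=
      Finset.univ.filter fun p => P.scope p.1 p.2 ∈ S with hT
    have hTcard : T.card = L * S.card := by
      have := Finset.card_eq_sum_card_fiberwise
        (f := fun p : Σ c : C, Fin (P.arity c) => P.scope p.1 p.2)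
        (s := T) (t := S) (by intro p hp; simp [hT] at hp; exact hp)
      rw [this]
      have : ∀ v ∈ S, (T.filter fun p => P.scope p.1 p.2 = v).card = L := by
        intro v hv
        rw [← hdeg v, CSP.degree]
        congr 1
        ext p
        simp only [hT, Finset.mem_filter, Finset.mem_univ, true_and]
        constructor
        · rintro ⟨_, h⟩; exact h
        · rintro h; exact ⟨h ▸ hv, h⟩
      rw [Finset.sum_congr rfl this, Finset.sum_const, smul_eq_mul, mul_comm]
    have hTsum : T = Finset.univ.sigma fun c =>
        Finset.univ.filter fun i => P.scope c i ∈ S := by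
      ext ⟨c, i⟩
      simp [hT, Finset.mem_sigma]
    have hlower : 2 * (Finset.univ.filter fun c : C => ∃ i, P.scope c i ∈ S).card
        ≤ T.card := by
      rw [hTsum, Finset.card_sigma]
      calc 2 * (Finset.univ.filter fun c : C => ∃ i, P.scope c i ∈ S).card
          = ∑ c ∈ Finset.univ.filter fun c : C => ∃ i, P.scope c i ∈ S, 2 := by
            rw [Finset.sum_const, smul_eq_mul, mul_comm]
        _ ≤ ∑ c ∈ Finset.univ.filter fun c : C => ∃ i, P.scope c i ∈ S,
              (Finset.univ.filter fun i => P.scope c i ∈ S).card := by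
            apply Finset.sum_le_sum
            intro c hc
            exact hconstr c (by simpa using hc)
        _ ≤ ∑ c : C, (Finset.univ.filter fun i => P.scope c i ∈ S).card :=
            Finset.sum_le_sum_of_subset (Finset.filter_subset _ _)
    have hexp := hexpander S hSe hle
    have hnat : 2 * (Finset.univ.filter fun c : C => ∃ i, P.scope c i ∈ S).card
        ≤ L * S.card := by omega
    have : ((2 * (Finset.univ.filter fun c : C => ∃ i, P.scope c i ∈ S).card : ℕ) : ℝ)
        ≤ ((L * S.card : ℕ) : ℝ) := by exact_mod_cast hnat
    push_cast at this
    linarith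
  · left
    funext v
    by_contra hv
    exact hSe ⟨v, by simp [hS, hv]⟩
end

section
/- (Quantitative form of Proposition 4.1.) Let Ω be a finite nonempty type, μ a probability measure on Ω, f : Ω → ℝ nonnegative with 𝔼_μ[f] > 0, and ν the planted measure ν(A) = 𝔼_μ[f · 1_A] / 𝔼_μ[f]. Let N > 0 and real numbers c, ε, δ, m be given, and let A ⊆ Ω be a set such that: μ(A) ≤ exp(−c·N) (the property Ω \ A is thermodynamic for μ), f(ω) ≤ exp((m + ε)·N) for all ω ∈ A, and 𝔼_μ[f] ≥ exp((m − δ)·N) (annealed entropy close to m). Then ν(A) ≤ exp((ε + δ − c)·N); in particular if c > ε + δ the set A has exponentially small probability also under the planted measure. -/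
/-- Quantitative form of Proposition 4.1: if `μ(A) ≤ exp(−c·N)`,
`f ≤ exp((m+ε)·N)` on `A`, and `𝔼_μ[f] ≥ exp((m−δ)·N)`, then the planted
measure of `A`, namely `𝔼_μ[f·1_A] / 𝔼_μ[f]`, is at most `exp((ε+δ−c)·N)`. -/
theorem planted_measure_of_rare_set_exponentially_small
    {Ω : Type*} [Fintype Ω] [Nonempty Ω]
    (μ : Ω → ℝ) (hμ0 : ∀ ω, 0 ≤ μ ω) (hμ1 : ∑ ω, μ ω = 1)
    (f : Ω → ℝ) (hf0 : ∀ ω, 0 ≤ f ω) (hfpos : 0 < ∑ ω, μ ω * f ω)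
    (N c ε δ m : ℝ) (hN : 0 < N)
    (A : Finset Ω)
    (hA : ∑ ω ∈ A, μ ω ≤ Real.exp (-c * N))
    (hfA : ∀ ω ∈ A, f ω ≤ Real.exp ((m + ε) * N))
    (hE : Real.exp ((m - δ) * N) ≤ ∑ ω, μ ω * f ω) :
    (∑ ω ∈ A, μ ω * f ω) / (∑ ω, μ ω * f ω) ≤ Real.exp ((ε + δ - c) * N) := by
  rw [div_le_iff₀ hfpos]
  have h1 : ∑ ω ∈ A, μ ω * f ω ≤ Real.exp ((m + ε) * N) * ∑ ω ∈ A, μ ω := by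
    rw [Finset.mul_sum]
    refine Finset.sum_le_sum fun ω hω => ?_
    rw [mul_comm (Real.exp _)]
    exact mul_le_mul_of_nonneg_left (hfA ω hω) (hμ0 ω)
  have h2 : Real.exp ((m + ε) * N) * ∑ ω ∈ A, μ ω ≤
      Real.exp ((m + ε) * N) * Real.exp (-c * N) :=
    mul_le_mul_of_nonneg_left hA (Real.exp_nonneg _)
  have h3 : Real.exp ((m + ε) * N) * Real.exp (-c * N) =
      Real.exp ((ε + δ - c) * N) * Real.exp ((m - δ) * N) := by
    rw [← Real.exp_add, ← Real.exp_add]; ring_nf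
  calc ∑ ω ∈ A, μ ω * f ω ≤ Real.exp ((ε + δ - c) * N) * Real.exp ((m - δ) * N) := by
        linarith
    _ ≤ Real.exp ((ε + δ - c) * N) * ∑ ω, μ ω * f ω :=
        mul_le_mul_of_nonneg_left hE (Real.exp_nonneg _)
end

section
/- (Leaf values uniquely imply all values in locked tree problems.) Let a CSP instance be given in which every constraint is locked and every scope map var_c is injective, and suppose the factor graph — the bipartite simple graph on V ⊕ C with an edge between v and c exactly when v lies in the scope of c — is acyclic. If σ and τ are two assignments satisfying every constraint and σ(v) = τ(v) for every variable v of degree at most 1 (the leaves), then σ = τ. -/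
/-- The factor graph of a CSP instance: the bipartite simple graph on `V ⊕ C`
with an edge between a variable and a constraint iff the variable lies in
the scope of the constraint. -/
def CSP.factorGraph {V C : Type*} (P : CSP V C) : SimpleGraph (V ⊕ C) where
  Adj x y :=
    (∃ v c, x = Sum.inl v ∧ y = Sum.inr c ∧ ∃ i, P.scope c i = v) ∨
    (∃ v c, x = Sum.inr c ∧ y = Sum.inl v ∧ ∃ i, P.scope c i = v)
  symm := by
    constructor
    rintro x y (⟨v, c, rfl, rfl, h⟩ | ⟨v, c, rfl, rfl, h⟩)
    · exact Or.inr ⟨v, c, rfl, rfl, h⟩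
    · exact Or.inl ⟨v, c, rfl, rfl, h⟩
  loopless := by
    constructor
    rintro x (⟨v, c, rfl, h, -⟩ | ⟨v, c, rfl, h, -⟩) <;> simp at h

section AuxLemmas
open SimpleGraph

private lemma edge_mem_path_start {W : Type*} {G : SimpleGraph W} {v u x : W}
    (p : G.Walk v u) (hp : p.IsPath) (h : s(x, v) ∈ p.edges) : x = p.getVert 1 := by
  cases p with
  | nil => simp at h
  | @cons _ w _ h' p' =>
    rw [Walk.cons_isPath_iff] at hp
    simp only [Walk.edges_cons, List.mem_cons] at h
    rcases h with h | h
    · rw [Sym2.eq_iff] at h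
      rcases h with ⟨hx, hv⟩ | ⟨hx, _⟩
      · exact absurd (hv ▸ h') (by subst hv; exact G.irrefl)
      · subst hx; exact (p'.getVert_zero).symm
    · exact absurd (Walk.snd_mem_support_of_mem_edges p' h) hp.2

private lemma acyclic_min_degree_two_empty {W : Type*} (G : SimpleGraph W)
    (hac : G.IsAcyclic) (S : Finset W)
    (hS : ∀ v ∈ S, ∃ a ∈ S, ∃ b ∈ S, a ≠ b ∧ G.Adj v a ∧ G.Adj v b) :
    S = ∅ := by
  classical
  by_contra hne
  obtain ⟨v0, hv0⟩ := Finset.nonempty_of_ne_empty hne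
  have ext : ∀ (a : W) (p : G.Walk a v0), p.IsPath → (∀ x ∈ p.support, x ∈ S) →
      ∃ (b : W) (q : G.Walk b v0), q.IsPath ∧ (∀ x ∈ q.support, x ∈ S) ∧
        q.support.length = p.support.length + 1 := by
    intro a p hp hsup
    obtain ⟨c1, hc1, c2, hc2, hne12, hadj1, hadj2⟩ := hS a (hsup a p.start_mem_support)
    have extend : ∀ c : W, c ∈ S → G.Adj a c → c ∉ p.support →
        ∃ (b : W) (q : G.Walk b v0), q.IsPath ∧ (∀ x ∈ q.support, x ∈ S) ∧
          q.support.length = p.support.length + 1 := by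
      intro c hcS hadj hcsup
      refine ⟨c, Walk.cons hadj.symm p, ?_, ?_, by simp⟩
      · rw [Walk.cons_isPath_iff]; exact ⟨hp, hcsup⟩
      · intro x hx
        rw [Walk.support_cons, List.mem_cons] at hx
        rcases hx with rfl | hx
        · exact hcS
        · exact hsup x hx
    by_cases h1 : c1 ∈ p.support
    · by_cases h2 : c2 ∈ p.support
      · -- both on the path: get a cycle
        obtain ⟨x, hx, hxadj, hxsnd⟩ : ∃ x, x ∈ p.support ∧ G.Adj a x ∧ x ≠ p.getVert 1 := by
          by_cases hs : c1 = p.getVert 1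
          · exact ⟨c2, h2, hadj2, fun h => hne12 (hs.trans h.symm)⟩
          · exact ⟨c1, h1, hadj1, hs⟩
        have hq : (p.takeUntil x hx).IsPath := hp.takeUntil hx
        have hedge : s(x, a) ∉ (p.takeUntil x hx).edges := by
          intro hmem
          exact hxsnd (edge_mem_path_start p hp (p.edges_takeUntil_subset hx hmem))
        have hcyc : (Walk.cons hxadj.symm (p.takeUntil x hx)).IsCycle := by
          rw [Walk.cons_isCycle_iff]; exact ⟨hq, hedge⟩
        exact absurd hcyc (hac _)
      · exact extend c2 hc2 hadj2 h2
    · exact extend c1 hc1 hadj1 h1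
  have grow : ∀ k : ℕ, ∃ (b : W) (q : G.Walk b v0), q.IsPath ∧ (∀ x ∈ q.support, x ∈ S) ∧
      q.support.length = k + 1 := by
    intro k
    induction k with
    | zero => exact ⟨v0, Walk.nil, Walk.IsPath.nil, by simpa using hv0, by simp⟩
    | succ n ih =>
      obtain ⟨b, q, h1, h2, h3⟩ := ih
      obtain ⟨b', q', h1', h2', h3'⟩ := ext b q h1 h2
      exact ⟨b', q', h1', h2', by omega⟩
  obtain ⟨b, q, hq, hsub, hlen⟩ := grow S.card
  have hle : q.support.length ≤ S.card := by
    rw [← List.toFinset_card_of_nodup hq.support_nodup]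
    exact Finset.card_le_card fun x hx => hsub x (List.mem_toFinset.mp hx)
  omega
end AuxLemmas

/-- In a locked CSP instance with injective scopes whose factor graph is
acyclic, the values on the leaves (variables of degree at most one) uniquely
determine the values of all variables: two satisfying assignments agreeing on
the leaves are equal. -/
theorem locked_tree_leaves_determine_solution
    {V C : Type*} [Fintype C] [DecidableEq V]
    (P : CSP V C)
    (hlocked : ∀ c, P.LockedAt c)
    (hinj : ∀ c, Function.Injective (P.scope c))
    (hacyclic : P.factorGraph.IsAcyclic)
    (σ τ : V → Bool) (hσ : P.Satisfies σ) (hτ : P.Satisfies τ)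
    (hleaf : ∀ v : V,
      (Finset.univ.filter fun c : C => ∃ i, P.scope c i = v).card ≤ 1 → σ v = τ v) :
    σ = τ := by
  classical
  set Dc : Finset C := Finset.univ.filter
    (fun c => ∃ i, σ (P.scope c i) ≠ τ (P.scope c i)) with hDc
  have hmemDc : ∀ (c : C) (i : Fin (P.arity c)),
      σ (P.scope c i) ≠ τ (P.scope c i) → c ∈ Dc := by
    intro c i hi
    simp only [hDc, Finset.mem_filter, Finset.mem_univ, true_and]
    exact ⟨i, hi⟩
  set Dv : Finset V := Dc.biUnion (fun c =>
    ((Finset.univ : Finset (Fin (P.arity c))).filter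
      (fun i => σ (P.scope c i) ≠ τ (P.scope c i))).image (P.scope c)) with hDv
  have hDvmem : ∀ v ∈ Dv, σ v ≠ τ v := by
    intro v hv
    simp only [hDv, Finset.mem_biUnion, Finset.mem_image, Finset.mem_filter,
      Finset.mem_univ, true_and] at hv
    obtain ⟨c, _, i, hi, rfl⟩ := hv
    exact hi
  have hdeg : ∀ v : V, σ v ≠ τ v →
      1 < (Finset.univ.filter fun c : C => ∃ i, P.scope c i = v).card := by
    intro v hv
    by_contra h
    exact hv (hleaf v (by omega))
  have hmemDv : ∀ (v : V), σ v ≠ τ v → v ∈ Dv := by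
    intro v hv
    obtain ⟨c, hc⟩ := Finset.card_pos.mp
      (by have := hdeg v hv; omega :
        0 < (Finset.univ.filter fun c : C => ∃ i, P.scope c i = v).card)
    simp only [Finset.mem_filter, Finset.mem_univ, true_and] at hc
    obtain ⟨i, hi⟩ := hc
    have hdiff : σ (P.scope c i) ≠ τ (P.scope c i) := by rw [hi]; exact hv
    simp only [hDv, Finset.mem_biUnion, Finset.mem_image, Finset.mem_filter,
      Finset.mem_univ, true_and]
    exact ⟨c, hmemDc c i hdiff, i, hdiff, hi⟩
  set S : Finset (V ⊕ C) := Dv.image Sum.inl ∪ Dc.image Sum.inr with hSdef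
  have hinlS : ∀ v ∈ Dv, Sum.inl v ∈ S := fun v hv =>
    Finset.mem_union_left _ (Finset.mem_image_of_mem _ hv)
  have hinrS : ∀ c ∈ Dc, Sum.inr c ∈ S := fun c hc =>
    Finset.mem_union_right _ (Finset.mem_image_of_mem _ hc)
  have hSempty : S = ∅ := by
    apply acyclic_min_degree_two_empty P.factorGraph hacyclic
    rintro (v | c) hw
    · have hv : v ∈ Dv := by
        simp only [hSdef, Finset.mem_union, Finset.mem_image] at hw
        rcases hw with ⟨x, hx, hxe⟩ | ⟨x, _, hxe⟩
        · exact (Sum.inl.inj hxe) ▸ hx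
        · exact absurd hxe (by simp)
      have hvd := hDvmem v hv
      obtain ⟨c1, hc1, c2, hc2, hne12⟩ := Finset.one_lt_card.mp (hdeg v hvd)
      simp only [Finset.mem_filter, Finset.mem_univ, true_and] at hc1 hc2
      obtain ⟨i1, hi1⟩ := hc1
      obtain ⟨i2, hi2⟩ := hc2
      refine ⟨Sum.inr c1, hinrS c1 (hmemDc c1 i1 (by rw [hi1]; exact hvd)),
        Sum.inr c2, hinrS c2 (hmemDc c2 i2 (by rw [hi2]; exact hvd)),
        by simpa using hne12, ?_, ?_⟩
      · exact Or.inl ⟨v, c1, rfl, rfl, i1, hi1⟩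
      · exact Or.inl ⟨v, c2, rfl, rfl, i2, hi2⟩
    · have hc : c ∈ Dc := by
        simp only [hSdef, Finset.mem_union, Finset.mem_image] at hw
        rcases hw with ⟨x, _, hxe⟩ | ⟨x, hx, hxe⟩
        · exact absurd hxe (by simp)
        · exact (Sum.inr.inj hxe) ▸ hx
      simp only [hDc, Finset.mem_filter, Finset.mem_univ, true_and] at hc
      obtain ⟨i0, hi0⟩ := hc
      have hcard : (Finset.univ.filter fun i : Fin (P.arity c) =>
          σ (P.scope c i) ≠ τ (P.scope c i)).card ≠ 1 := by
        intro h1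
        exact hlocked c ⟨fun i => σ (P.scope c i), fun i => τ (P.scope c i),
          hσ c, hτ c, h1⟩
      have hpos : 0 < (Finset.univ.filter fun i : Fin (P.arity c) =>
          σ (P.scope c i) ≠ τ (P.scope c i)).card :=
        Finset.card_pos.mpr ⟨i0, by simp [hi0]⟩
      have h2 : 1 < (Finset.univ.filter fun i : Fin (P.arity c) =>
          σ (P.scope c i) ≠ τ (P.scope c i)).card := by omega
      obtain ⟨i1, hi1, i2, hi2, hne12⟩ := Finset.one_lt_card.mp h2
      simp only [Finset.mem_filter, Finset.mem_univ, true_and] at hi1 hi2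
      have hv12 : P.scope c i1 ≠ P.scope c i2 := fun h => hne12 (hinj c h)
      refine ⟨Sum.inl (P.scope c i1), hinlS _ (hmemDv _ hi1),
        Sum.inl (P.scope c i2), hinlS _ (hmemDv _ hi2),
        by simpa using hv12, ?_, ?_⟩
      · exact Or.inr ⟨P.scope c i1, c, rfl, rfl, i1, rfl⟩
      · exact Or.inr ⟨P.scope c i2, c, rfl, rfl, i2, rfl⟩
  funext v
  by_contra hv
  have := hinlS v (hmemDv v hv)
  rw [hSempty] at this
  exact absurd this (Finset.notMem_empty _)
end

section
/- Let a CSP instance be given in which every constraint is locked and every variable has degree at least 2, and let σ : V → Bool satisfy every constraint. Then the family of delta messages ψ^{a→i}_s = (1 if s = σ(var_a i), 0 otherwise) is a fixed point of the belief propagation equations: for every constraint a, every index i in its scope, and every s ∈ Bool, ∑_{t : Fin K_a → Bool, t i = s, φ_a t} ∏_{j ≠ i} ∏_{b ∈ ∂(var_a j) \ {a}} ψ^{b→j}_{t j} equals 1 if s = σ(var_a i) and 0 otherwise (so the normalization constant Z^{a→i} equals 1 and the normalized update reproduces the delta messages). -/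
/-- `∂ v`: the set of constraints whose scope contains the variable `v`. -/
def CSP.nbhd {V C : Type*} [Fintype C] [DecidableEq V] (P : CSP V C) (v : V) :
    Finset C :=
  Finset.univ.filter fun c : C => ∃ i, P.scope c i = v

/-- In a locked instance in which every variable belongs to at least two
constraints, the delta messages `ψ^{b→v}_s = [s = σ v]` associated to a
satisfying assignment `σ` form a fixed point of the belief propagation
equations: the unnormalized update
`∑_{t : t i = s, φ_a t} ∏_{j ≠ i} ∏_{b ∈ ∂(var_a j) \ {a}} ψ^{b→(var_a j)}_{t j}`
equals `1` if `s = σ(var_a i)` and `0` otherwise (so `Z^{a→i} = 1` and the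
normalized update reproduces the delta messages). -/
theorem delta_messages_BP_fixed_point
    {V C : Type*} [Fintype C] [DecidableEq V] [DecidableEq C]
    (P : CSP V C) [∀ c, DecidablePred (P.pred c)]
    (hlocked : ∀ c, P.LockedAt c)
    (hdeg : ∀ v : V, 2 ≤ (P.nbhd v).card)
    (σ : V → Bool) (hσ : P.Satisfies σ)
    (ψ : C → V → Bool → ℝ)
    (hψ : ∀ (b : C) (v : V) (s : Bool), ψ b v s = if s = σ v then 1 else 0) :
    ∀ (a : C) (i : Fin (P.arity a)) (s : Bool),
      (∑ t ∈ Finset.univ.filter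
          (fun t : Fin (P.arity a) → Bool => t i = s ∧ P.pred a t),
        ∏ j ∈ Finset.univ.erase i,
          ∏ b ∈ (P.nbhd (P.scope a j)).erase a,
            ψ b (P.scope a j) (t j))
        = if s = σ (P.scope a i) then 1 else 0 := by
  intro a i s
  set τ : Fin (P.arity a) → Bool := fun j => σ (P.scope a j) with hτ
  have hτpred : P.pred a τ := hσ a
  have hinner : ∀ (t : Fin (P.arity a) → Bool) (j : Fin (P.arity a)),
      (∏ b ∈ (P.nbhd (P.scope a j)).erase a, ψ b (P.scope a j) (t j))
        = if t j = σ (P.scope a j) then 1 else 0 := by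
    intro t j
    by_cases h : t j = σ (P.scope a j)
    · simp [h, hψ]
    · rw [if_neg h]
      have hmem : a ∈ P.nbhd (P.scope a j) := by
        simp only [CSP.nbhd, Finset.mem_filter, Finset.mem_univ, true_and]; exact ⟨j, rfl⟩
      have hcard : 1 ≤ ((P.nbhd (P.scope a j)).erase a).card := by
        have h1 := Finset.card_erase_of_mem hmem
        have h2 := hdeg (P.scope a j)
        omega
      obtain ⟨b, hb⟩ := Finset.card_pos.mp hcard
      exact Finset.prod_eq_zero hb (by simp [hψ, h])
  have houter : ∀ t : Fin (P.arity a) → Bool,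
      (∏ j ∈ Finset.univ.erase i, ∏ b ∈ (P.nbhd (P.scope a j)).erase a,
        ψ b (P.scope a j) (t j))
        = if ∀ j ∈ Finset.univ.erase i, t j = τ j then (1:ℝ) else 0 := by
    intro t
    by_cases h : ∀ j ∈ Finset.univ.erase i, t j = τ j
    · rw [if_pos h]
      exact Finset.prod_eq_one fun j hj => by rw [hinner, if_pos (h j hj)]
    · rw [if_neg h]
      push_neg at h
      obtain ⟨j, hj, hne⟩ := h
      exact Finset.prod_eq_zero hj (by rw [hinner, if_neg hne])
  rw [Finset.sum_congr rfl fun t _ => houter t, Finset.sum_boole,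
    Finset.filter_filter]
  by_cases hs : s = σ (P.scope a i)
  · rw [if_pos hs]
    have : (Finset.univ.filter fun t : Fin (P.arity a) → Bool =>
        (t i = s ∧ P.pred a t) ∧ ∀ j ∈ Finset.univ.erase i, t j = τ j) = {τ} := by
      ext t
      simp only [Finset.mem_filter, Finset.mem_univ, true_and, Finset.mem_singleton,
        Finset.mem_erase]
      constructor
      · rintro ⟨⟨hti, _⟩, hrest⟩
        funext j
        by_cases hji : j = i
        · subst hji; rw [hti, hs]
        · exact hrest j ⟨hji, trivial⟩
      · rintro rfl
        exact ⟨⟨hs.symm, hτpred⟩, fun j _ => rfl⟩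
    rw [this]; simp
  · rw [if_neg hs]
    have : (Finset.univ.filter fun t : Fin (P.arity a) → Bool =>
        (t i = s ∧ P.pred a t) ∧ ∀ j ∈ Finset.univ.erase i, t j = τ j) = ∅ := by
      rw [Finset.filter_eq_empty_iff]
      rintro t _ ⟨⟨hti, hpred⟩, hrest⟩
      apply hlocked a
      refine ⟨t, τ, hpred, hτpred, ?_⟩
      have : (Finset.univ.filter fun j => t j ≠ τ j) = {i} := by
        ext j
        simp only [Finset.mem_filter, Finset.mem_univ, true_and, Finset.mem_singleton]
        constructor
        · intro hne
          by_contra hji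
          exact hne (hrest j (Finset.mem_erase.mpr ⟨hji, Finset.mem_univ j⟩))
        · rintro rfl
          rw [hti]; exact hs
      rw [this, Finset.card_singleton]
    rw [this]; simp
end
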